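/- Fix N and let L = L(D,N). Let s^k (with 1 ≤ k ≤ N) be a long avalanche up to N and let P be the largest peak of s^k. Then: π(k)_i = π(k−1)_i for all i with L+D−1 ≤ i < P; π(k)_P = π(k−1)_P − (D−1) = 0; π(k)_i = π(k−1)_i + 1 for all i with P < i ≤ P+D−1; and π(k)_i = π(k−1)_i for all i > P+D−1. -/

import Mathlib

open scoped Classical

/-- A configuration of KSPM: a sequence of height differences. -/
abbrev Config := ℕ → ℕ

/-- The result of firing column `i` in configuration `σ` (KSPM(D) rule). -/
def fireAt (D : ℕ) (σ : Config) (i : ℕ) : Config := fun j =>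
  if j = i then σ i - D
  else if j + 1 = i then σ j + (D - 1)
  else if j = i + D - 1 then σ j + 1
  else σ j

/-- `σ →_i σ'` : column `i` can be fired in `σ`, producing `σ'`. -/
def Step (D : ℕ) (σ : Config) (i : ℕ) (σ' : Config) : Prop :=
  D ≤ σ i ∧ σ' = fireAt D σ i

/-- `σ → σ'`. -/
def StepRel (D : ℕ) (σ σ' : Config) : Prop := ∃ i, Step D σ i σ'

/-- `σ →* σ'`. -/
def Reaches (D : ℕ) : Config → Config → Prop := Relation.ReflTransGen (StepRel D)

/-- A configuration is stable (a fixed point) when no transition applies. -/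
def Stable (D : ℕ) (σ : Config) : Prop := ∀ i, σ i < D

/-- `Exec D σ s σ'` : the strategy `s` leads from `σ` to `σ'`. -/
def Exec (D : ℕ) : Config → List ℕ → Config → Prop
  | σ, [], σ' => σ' = σ
  | σ, i :: s, σ' => D ≤ σ i ∧ Exec D (fireAt D σ i) s σ'

/-- The initial configuration with `N` stacked grains on column 0. -/
def grains (N : ℕ) : Config := fun i => if i = 0 then N else 0

/-- `σ^{↓0}` : one grain added on column 0. -/
def addGrain (σ : Config) : Config := fun i => if i = 0 then σ i + 1 else σ i

/-- `π(σ)` : the (unique) stable configuration reachable from `σ`. -/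
noncomputable def piCfg (D : ℕ) (σ : Config) : Config :=
  Classical.epsilon fun μ => Reaches D σ μ ∧ Stable D μ

/-- `π(N)` : the stable configuration reached from `N` stacked grains. -/
noncomputable def piN (D N : ℕ) : Config := piCfg D (grains N)

/-- The `k`-th avalanche: the lexicographically least strategy from
`π(k−1)^{↓0}` to `π(k)`. -/
noncomputable def avalanche (D k : ℕ) : List ℕ :=
  Classical.epsilon fun s =>
    Exec D (addGrain (piN D (k - 1))) s (piN D k) ∧
    ∀ s', Exec D (addGrain (piN D (k - 1))) s' (piN D k) →
      s = s' ∨ List.Lex (· < ·) s s'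

/-- `p` is a peak of the strategy `s` : it is fired at some time, and is
larger than every previously fired column. -/
def IsPeak (s : List ℕ) (p : ℕ) : Prop :=
  ∃ t : Fin s.length, s.get t = p ∧ ∀ t' : Fin s.length, t' < t → s.get t' < p

/-- An avalanche is dense from `l` : with `m` its greatest fired column, every
column of `[l, m]` is fired. -/
def DenseFrom (s : List ℕ) (l : ℕ) : Prop :=
  ∃ m, (∀ i, l ≤ i → i ≤ m → i ∈ s) ∧ ∀ i, m < i → i ∉ s

/-- `L'(D,k)` : the least column from which the `k`-th avalanche is dense. -/
noncomputable def Lp (D k : ℕ) : ℕ := sInf {l | DenseFrom (avalanche D k) l}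

/-- The global density column `L(D,N)`. -/
noncomputable def Lgdc (D N : ℕ) : ℕ := (Finset.Icc 1 N).sup (Lp D)

/-- Indices `k ∈ [1,N]` of the long avalanches up to `N` (those firing column
`L(D,N)+D−1`), in increasing order: this enumerates `Φ(D,N)`. -/
noncomputable def longList (D N : ℕ) : List ℕ :=
  (List.range (N + 1)).filter fun k =>
    decide (1 ≤ k ∧ Lgdc D N + D - 1 ∈ avalanche D k)

/-! ### Basic lemmas -/

lemma exec_append {D : ℕ} : ∀ (p q : List ℕ) (σ σ' : Config),
    Exec D σ (p ++ q) σ' ↔ ∃ μ, Exec D σ p μ ∧ Exec D μ q σ' := by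
  intro p
  induction p with
  | nil =>
    intro q σ σ'
    constructor
    · intro h; exact ⟨σ, rfl, h⟩
    · rintro ⟨μ, hμ, h⟩; cases hμ; exact h
  | cons a p ih =>
    intro q σ σ'
    constructor
    · rintro ⟨ha, h⟩
      obtain ⟨μ, h1, h2⟩ := (ih q _ σ').1 h
      exact ⟨μ, ⟨ha, h1⟩, h2⟩
    · rintro ⟨μ, ⟨ha, h1⟩, h2⟩
      exact ⟨ha, (ih q _ σ').2 ⟨μ, h1, h2⟩⟩

lemma reaches_of_exec {D : ℕ} : ∀ (s : List ℕ) (σ σ' : Config),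
    Exec D σ s σ' → Reaches D σ σ' := by
  intro s
  induction s with
  | nil => intro σ σ' h; cases h; exact Relation.ReflTransGen.refl
  | cons a s ih =>
    intro σ σ' h
    obtain ⟨ha, h⟩ := h
    exact Relation.ReflTransGen.head ⟨a, ha, rfl⟩ (ih _ _ h)

lemma exec_of_reaches {D : ℕ} {σ σ' : Config} (h : Reaches D σ σ') :
    ∃ s, Exec D σ s σ' := by
  induction h with
  | refl => exact ⟨[], rfl⟩
  | tail _ hstep ih =>
    obtain ⟨s, hs⟩ := ih
    obtain ⟨i, hi, rfl⟩ := hstep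
    exact ⟨s ++ [i], (exec_append s [i] _ _).2 ⟨_, hs, hi, rfl⟩⟩

lemma stable_no_step {D : ℕ} {μ c : Config} (hμ : Stable D μ) (h : Reaches D μ c) : c = μ := by
  induction h using Relation.ReflTransGen.head_induction_on with
  | refl => rfl
  | head hstep _ _ =>
    obtain ⟨i, hi, _⟩ := hstep
    exact absurd hi (not_le.2 (hμ i))

/-! ### Commutation / diamond -/

lemma fireAt_ne {D : ℕ} (σ : Config) {i j : ℕ} (h : j ≠ i) :
    σ j ≤ fireAt D σ i j := by
  unfold fireAt
  split_ifs <;> omega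

lemma fireAt_comm {D : ℕ} (hD : 2 ≤ D) {σ : Config} {i j : ℕ} (hij : i ≠ j)
    (hi : D ≤ σ i) (hj : D ≤ σ j) :
    fireAt D (fireAt D σ i) j = fireAt D (fireAt D σ j) i := by
  funext m
  unfold fireAt
  rcases eq_or_ne m i with rfl | hmi <;> rcases eq_or_ne m j with rfl | hmj <;>
    split_ifs <;> omega

lemma diamond {D : ℕ} (hD : 2 ≤ D) :
    ∀ a b c : Config, StepRel D a b → StepRel D a c →
      ∃ d, Relation.ReflGen (StepRel D) b d ∧ Relation.ReflTransGen (StepRel D) c d := by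
  rintro a b c ⟨i, hi, rfl⟩ ⟨j, hj, rfl⟩
  rcases eq_or_ne i j with rfl | hij
  · exact ⟨fireAt D a i, Relation.ReflGen.refl, Relation.ReflTransGen.refl⟩
  · refine ⟨fireAt D (fireAt D a i) j, Relation.ReflGen.single ⟨j, le_trans hj (fireAt_ne a (Ne.symm hij)), rfl⟩, Relation.ReflTransGen.single ⟨i, le_trans hi (fireAt_ne a hij), ?_⟩⟩
    exact fireAt_comm hD hij hi hj

lemma confluence {D : ℕ} (hD : 2 ≤ D) {σ a b : Config}
    (ha : Reaches D σ a) (hb : Reaches D σ b) :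
    ∃ c, Reaches D a c ∧ Reaches D b c := by
  have := Relation.church_rosser (diamond hD) ha hb
  obtain ⟨c, h1, h2⟩ := this
  exact ⟨c, h1, h2⟩

lemma stable_unique {D : ℕ} (hD : 2 ≤ D) {σ a b : Config}
    (ha : Reaches D σ a) (hsa : Stable D a) (hb : Reaches D σ b) (hsb : Stable D b) : a = b := by
  obtain ⟨c, h1, h2⟩ := confluence hD ha hb
  rw [← stable_no_step hsa h1, ← stable_no_step hsb h2]

lemma reaches_stable {D : ℕ} (hD : 2 ≤ D) {σ a b : Config}
    (ha : Reaches D σ a) (hb : Reaches D σ b) (hsb : Stable D b) : Reaches D a b := by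
  obtain ⟨c, h1, h2⟩ := confluence hD ha hb
  rwa [stable_no_step hsb h2] at h1
/-! ### Termination -/

lemma fireAt_val {D : ℕ} (hD : 1 ≤ D) (σ : Config) (i m : ℕ) :
    fireAt D σ i m = if m = i then σ i - D else if m + 1 = i then σ m + (D-1)
      else if m = i + (D-1) then σ m + 1 else σ m := by
  unfold fireAt
  rw [show i + D - 1 = i + (D-1) from by omega]

open Finset in
lemma sum_fireAt {D : ℕ} (hD : 2 ≤ D) (σ : Config) {i B : ℕ} (w : ℕ → ℕ)
    (hiB : i < B) (hiDB : i + (D - 1) < B) (hfire : D ≤ σ i) :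
    ∑ m ∈ range B, w m * fireAt D σ i m + w i * D
      = ∑ m ∈ range B, w m * σ m + (if 1 ≤ i then w (i-1) * (D-1) else 0) + w (i + (D-1)) := by
  have key : ∀ m, w m * fireAt D σ i m + (if m = i then w m * D else 0)
      = w m * σ m + ((if m + 1 = i then w m * (D-1) else 0) + (if m = i + (D-1) then w m else 0)) := by
    intro m
    rw [fireAt_val (by omega : 1 ≤ D) σ i m]
    rcases eq_or_ne m i with rfl | hmi
    · rw [if_pos rfl, if_pos rfl, if_neg (by omega : ¬ m + 1 = m),
        if_neg (by omega : ¬ m = m + (D-1))]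
      rw [← Nat.left_distrib, Nat.sub_add_cancel hfire]
      omega
    · rw [if_neg hmi, if_neg hmi]
      rcases eq_or_ne (m+1) i with h1 | h1
      · rw [if_pos h1, if_pos h1, if_neg (by omega : ¬ m = i + (D-1))]
        try ring
      · rw [if_neg h1, if_neg h1]
        rcases eq_or_ne m (i + (D-1)) with h2 | h2
        · rw [if_pos h2, if_pos h2]
          try ring
        · rw [if_neg h2, if_neg h2]
          try ring
  have hsum := Finset.sum_congr (rfl : range B = range B) (fun m _ => key m)
  rw [Finset.sum_add_distrib, Finset.sum_add_distrib, Finset.sum_add_distrib] at hsum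
  rw [Finset.sum_ite_eq' (range B) i (fun m => w m * D)] at hsum
  rw [Finset.sum_ite_eq' (range B) (i + (D-1)) (fun m => w m)] at hsum
  rw [if_pos (mem_range.2 hiB), if_pos (mem_range.2 hiDB)] at hsum
  have h2 : ∑ m ∈ range B, (if m + 1 = i then w m * (D-1) else 0)
      = if 1 ≤ i then w (i-1) * (D-1) else 0 := by
    rcases Nat.eq_zero_or_pos i with rfl | hi
    · rw [if_neg (by omega)]
      exact Finset.sum_eq_zero fun m _ => by rw [if_neg (by omega)]
    · rw [if_pos (show 1 ≤ i from hi)]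
      rw [show (fun m => if m + 1 = i then w m * (D-1) else 0)
            = (fun m => if m = i - 1 then w m * (D-1) else 0) from
          funext fun m => by rw [if_congr (by omega : (m + 1 = i) ↔ (m = i - 1)) rfl rfl]]
      rw [Finset.sum_ite_eq' (range B) (i-1) (fun m => w m * (D-1))]
      rw [if_pos (mem_range.2 (by omega))]
  rw [h2] at hsum
  omega

/-- invariant: support in `range N` and total grain weight `N`. -/
def KInv (N : ℕ) (σ : Config) : Prop :=
  (∀ m, σ m ≠ 0 → m < N) ∧ (∑ m ∈ Finset.range N, (m+1) * σ m = N)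

lemma kinv_step {D N : ℕ} (hD : 2 ≤ D) {σ : Config} (h : KInv N σ) {i : ℕ} (hfire : D ≤ σ i) :
    KInv N (fireAt D σ i) ∧
      (∑ m ∈ Finset.range N, (m+1) * m * fireAt D σ i m
        = ∑ m ∈ Finset.range N, (m+1) * m * σ m + D * (D-1)) := by
  obtain ⟨hsupp, hsum⟩ := h
  have hiN : i < N := hsupp i (by omega)
  have hterm : (i+1) * σ i ≤ N := by
    rw [← hsum]
    exact Finset.single_le_sum (f := fun m => (m+1) * σ m) (fun m _ => Nat.zero_le _)
      (Finset.mem_range.2 hiN)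
  have hterm' : (i+1) * D ≤ N := le_trans (Nat.mul_le_mul_left _ hfire) hterm
  have h6 : i + D ≤ (i+1) * D := by nlinarith [Nat.mul_le_mul_left i (show 1 ≤ D from by omega)]
  have hiDN : i + (D-1) < N := by omega
  have e1 := sum_fireAt hD σ (fun m => m + 1) hiN hiDN hfire
  have e2 := sum_fireAt hD σ (fun m => (m+1) * m) hiN hiDN hfire
  refine ⟨⟨?_, ?_⟩, ?_⟩
  · intro m hm
    rw [fireAt_val (by omega : 1 ≤ D) σ i m] at hm
    split_ifs at hm with h1 h2 h3
    · omega
    · omega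
    · omega
    · exact hsupp m hm
  · -- grain sum preserved
    rcases Nat.eq_zero_or_pos i with rfl | hi
    · rw [if_neg (by omega)] at e1
      have h7 : (0+1) * D = D := by ring
      omega
    · rw [if_pos (show 1 ≤ i from hi)] at e1
      rw [show (i - 1 + 1) = i from by omega] at e1
      have key2 : (i+1)*D = i*(D-1) + (i + (D-1) + 1) := by
        zify [hi, show (1:ℕ) ≤ D from by omega]
        ring
      omega
  · rcases Nat.eq_zero_or_pos i with rfl | hi
    · rw [if_neg (by omega)] at e2
      have h7 : (0+1) * 0 * D = 0 := by ring
      have key2 : (0 + (D-1) + 1) * (0 + (D-1)) = D * (D-1) := by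
        zify [show (1:ℕ) ≤ D from by omega]
        ring
      omega
    · rw [if_pos (show 1 ≤ i from hi)] at e2
      rw [show (i - 1 + 1) = i from by omega] at e2
      have key2 : (i+1)*i*D + D*(D-1) = i*(i-1)*(D-1) + (i+(D-1)+1)*(i+(D-1)) := by
        zify [hi, show (1:ℕ) ≤ D from by omega]
        ring
      omega

lemma exists_stable_of_kinv {D N : ℕ} (hD : 2 ≤ D) :
    ∀ K (σ : Config), KInv N σ → N * N + 1 - ∑ m ∈ Finset.range N, (m+1) * m * σ m ≤ K →
      ∃ μ, Reaches D σ μ ∧ Stable D μ := by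
  intro K
  induction K with
  | zero =>
    intro σ hinv hK
    exfalso
    have hW : ∑ m ∈ Finset.range N, (m+1) * m * σ m
        ≤ (N - 1) * (∑ m ∈ Finset.range N, (m+1) * σ m) := by
      rw [Finset.mul_sum]
      apply Finset.sum_le_sum
      intro m hm
      have hm' : m ≤ N - 1 := by have := Finset.mem_range.1 hm; omega
      calc (m+1) * m * σ m = m * ((m+1) * σ m) := by ring
        _ ≤ (N-1) * ((m+1) * σ m) := Nat.mul_le_mul_right _ hm'
    rw [hinv.2] at hW
    have : (N - 1) * N ≤ N * N := Nat.mul_le_mul_right _ (by omega)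
    omega
  | succ K ih =>
    intro σ hinv hK
    by_cases hstab : Stable D σ
    · exact ⟨σ, Relation.ReflTransGen.refl, hstab⟩
    · obtain ⟨i, hi⟩ : ∃ i, D ≤ σ i := by
        by_contra h
        push_neg at h
        exact hstab fun i => h i
      obtain ⟨hinv', hW⟩ := kinv_step hD hinv hi
      obtain ⟨μ, hr, hs⟩ := ih (fireAt D σ i) hinv' (by
        rw [hW]
        have h2 : 2 * 1 ≤ D * (D-1) := Nat.mul_le_mul hD (by omega)
        omega)
      exact ⟨μ, Relation.ReflTransGen.head ⟨i, hi, rfl⟩ hr, hs⟩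

lemma exists_stable {D : ℕ} (hD : 2 ≤ D) (N : ℕ) :
    ∃ μ, Reaches D (grains N) μ ∧ Stable D μ := by
  rcases Nat.eq_zero_or_pos N with rfl | hN
  · refine ⟨grains 0, Relation.ReflTransGen.refl, fun i => ?_⟩
    unfold grains; split_ifs <;> omega
  · apply exists_stable_of_kinv (N := N) hD (N * N + 1) (grains N)
    · constructor
      · intro m hm
        unfold grains at hm
        split_ifs at hm with h
        · omega
        · omega
      · have h8 : ∑ m ∈ Finset.range N, (m+1) * grains N m = (0+1) * grains N 0 :=
          Finset.sum_eq_single_of_mem 0 (Finset.mem_range.2 hN)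
            (fun b _ hb => by simp [grains, hb])
        rw [h8]
        simp [grains]
    · omega
/-! ### Counting -/

lemma mem_le_foldr_max : ∀ (l : List ℕ) (j : ℕ), j ∈ l → j ≤ l.foldr max 0 := by
  intro l
  induction l with
  | nil => intro j h; cases h
  | cons a l ih =>
    intro j h
    rcases List.mem_cons.1 h with rfl | h
    · exact le_max_left _ _
    · exact le_trans (ih j h) (le_max_right _ _)

lemma exec_count {D : ℕ} (hD : 2 ≤ D) : ∀ (s : List ℕ) (σ σ' : Config),
    Exec D σ s σ' → ∀ i, σ' i + D * s.count i
      = σ i + (D-1) * s.count (i+1) + (if D-1 ≤ i then s.count (i - (D-1)) else 0) := by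
  intro s
  induction s with
  | nil => intro σ σ' h i; cases h; simp
  | cons a s ih =>
    intro σ σ' h i
    obtain ⟨ha, h⟩ := h
    have IH := ih _ _ h i
    have hfa : fireAt D σ a i + (if a = i then D else 0)
        = σ i + (if a = i + 1 then D - 1 else 0) + (if D-1 ≤ i ∧ a = i - (D-1) then 1 else 0) := by
      by_cases hia : i = a
      · subst hia
        rw [fireAt_val (show (1:ℕ) ≤ D from by omega) σ i i, if_pos rfl, if_pos rfl,
          if_neg (show ¬ i = i + 1 from by omega),
          if_neg (show ¬ (D-1 ≤ i ∧ i = i - (D-1)) from by omega)]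
        omega
      · rw [fireAt_val (show (1:ℕ) ≤ D from by omega) σ a i, if_neg hia,
          if_neg (show ¬ a = i from fun h' => hia h'.symm)]
        by_cases h1 : i + 1 = a
        · rw [if_pos h1, if_pos h1.symm,
            if_neg (show ¬ (D-1 ≤ i ∧ a = i - (D-1)) from by omega)]
        · rw [if_neg h1, if_neg (show ¬ a = i + 1 from fun h' => h1 h'.symm)]
          by_cases h2 : i = a + (D-1)
          · rw [if_pos h2, if_pos (show D-1 ≤ i ∧ a = i - (D-1) from by omega)]
          · rw [if_neg h2, if_neg (show ¬ (D-1 ≤ i ∧ a = i - (D-1)) from by omega)]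
    have hc1 : (a :: s).count i = s.count i + (if a = i then 1 else 0) := by
      simp only [List.count_cons, beq_iff_eq]
    have hc2 : (a :: s).count (i+1) = s.count (i+1) + (if a = i + 1 then 1 else 0) := by
      simp only [List.count_cons, beq_iff_eq]
    have hc3 : (if D-1 ≤ i then (a :: s).count (i - (D-1)) else 0)
        = (if D-1 ≤ i then s.count (i - (D-1)) else 0)
          + (if D-1 ≤ i ∧ a = i - (D-1) then 1 else 0) := by
      split_ifs with h1 h2 h2
      · simp only [List.count_cons, beq_iff_eq, if_pos h2.2]
      · simp only [List.count_cons, beq_iff_eq, if_neg (fun h' => h2 ⟨h1, h'⟩), Nat.add_zero]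
      · omega
      · omega
    have hm1 : D * (s.count i + (if a = i then 1 else 0))
        = D * s.count i + (if a = i then D else 0) := by split_ifs <;> ring
    have hm2 : (D-1) * (s.count (i+1) + (if a = i + 1 then 1 else 0))
        = (D-1) * s.count (i+1) + (if a = i + 1 then D - 1 else 0) := by split_ifs <;> ring
    rw [hc1, hc2, hc3, hm1, hm2]
    split_ifs at hfa IH ⊢ <;> omega

lemma exec_nodup {D : ℕ} (hD : 2 ≤ D) {τ : Config} (hτ : Stable D τ) :
    ∀ (s : List ℕ) (σ' : Config), Exec D (addGrain τ) s σ' → s.Nodup := by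
  intro s
  induction s using List.reverseRecOn with
  | nil => intro σ' _; exact List.nodup_nil
  | append_singleton s i ihs =>
    intro σ' h
    obtain ⟨μ, h1, h2⟩ := (exec_append s [i] _ _).1 h
    obtain ⟨hfi, -⟩ := h2
    have hnd : s.Nodup := ihs μ h1
    rw [List.nodup_append]
    refine ⟨hnd, List.nodup_singleton i, ?_⟩
    intro a ha b hb heq
    simp only [List.mem_singleton] at hb
    subst hb
    subst heq
    have hcount := exec_count hD s (addGrain τ) μ h1 a
    have hca : s.count a = 1 := List.count_eq_one_of_mem hnd ha
    have hca1 : s.count (a+1) ≤ 1 := List.nodup_iff_count_le_one.1 hnd (a+1)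
    have hca2 : s.count (a - (D-1)) ≤ 1 := List.nodup_iff_count_le_one.1 hnd _
    have hτa : τ a < D := hτ a
    rw [hca] at hcount
    have hb1 : (D-1) * s.count (a+1) ≤ (D-1) * 1 := Nat.mul_le_mul_left _ hca1
    rcases eq_or_ne a 0 with rfl | ha0
    · rw [if_neg (by omega : ¬ D - 1 ≤ 0)] at hcount
      have hg : addGrain τ 0 = τ 0 + 1 := by unfold addGrain; rw [if_pos rfl]
      omega
    · have hg : addGrain τ a = τ a := by unfold addGrain; rw [if_neg ha0]
      split_ifs at hcount with hle
      · omega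
      · omega

lemma counts_unique {D : ℕ} (hD : 2 ≤ D) {σ0 φ : Config} {s s' : List ℕ}
    (h : Exec D σ0 s φ) (h' : Exec D σ0 s' φ) : ∀ i, s.count i = s'.count i := by
  by_contra hne
  push_neg at hne
  obtain ⟨i0, hi0⟩ := hne
  set B := (s ++ s').foldr max 0 + 1 with hB
  have hBzero : ∀ j, B ≤ j → s.count j = 0 ∧ s'.count j = 0 := by
    intro j hj
    constructor <;> refine List.count_eq_zero.2 (fun hmem => ?_)
    · have := mem_le_foldr_max (s ++ s') j (List.mem_append_left s' hmem); omega
    · have := mem_le_foldr_max (s ++ s') j (List.mem_append_right s hmem); omega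
  classical
  set T : Finset ℕ := (Finset.range B).filter (fun j => s.count j ≠ s'.count j) with hT
  have hi0T : i0 ∈ T := by
    refine Finset.mem_filter.2 ⟨Finset.mem_range.2 ?_, hi0⟩
    by_contra hge
    have := hBzero i0 (by omega)
    omega
  have hTne : T.Nonempty := ⟨i0, hi0T⟩
  set j := T.max' hTne with hj
  have hjP : s.count j ≠ s'.count j := (Finset.mem_filter.1 (T.max'_mem hTne)).2
  have hgt : ∀ m, j < m → s.count m = s'.count m := by
    intro m hm
    by_contra hne'
    rcases lt_or_ge m B with hmB | hmB
    · have : m ∈ T := Finset.mem_filter.2 ⟨Finset.mem_range.2 hmB, hne'⟩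
      have := Finset.le_max' T m this
      omega
    · have := hBzero m hmB
      omega
  have e := exec_count hD s σ0 φ h (j + (D-1))
  have e' := exec_count hD s' σ0 φ h' (j + (D-1))
  rw [if_pos (show D-1 ≤ j + (D-1) from by omega),
    show j + (D-1) - (D-1) = j from by omega] at e e'
  have c1 : s.count (j + (D-1)) = s'.count (j + (D-1)) := hgt _ (by omega)
  have c2 : s.count (j + (D-1) + 1) = s'.count (j + (D-1) + 1) := hgt _ (by omega)
  rw [c1, c2] at e
  omega
/-! ### Spec satisfaction -/

lemma piN_spec {D : ℕ} (hD : 2 ≤ D) (N : ℕ) :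
    Reaches D (grains N) (piN D N) ∧ Stable D (piN D N) := by
  unfold piN piCfg
  exact Classical.epsilon_spec (exists_stable hD N)

lemma addGrain_fireAt {D : ℕ} (hD : 2 ≤ D) (σ : Config) {i : ℕ} (hi : D ≤ σ i) :
    addGrain (fireAt D σ i) = fireAt D (addGrain σ) i := by
  funext m
  simp only [addGrain, fireAt_val (show (1:ℕ) ≤ D from by omega)]
  split_ifs <;> omega

lemma reaches_addGrain {D : ℕ} (hD : 2 ≤ D) {σ τ : Config} (h : Reaches D σ τ) :
    Reaches D (addGrain σ) (addGrain τ) := by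
  induction h with
  | refl => exact Relation.ReflTransGen.refl
  | tail _ hstep ih =>
    obtain ⟨i, hi, rfl⟩ := hstep
    refine Relation.ReflTransGen.tail ih ⟨i, ?_, addGrain_fireAt hD _ hi⟩
    unfold addGrain
    split_ifs <;> omega

lemma grains_eq_addGrain {k : ℕ} (hk : 1 ≤ k) : grains k = addGrain (grains (k-1)) := by
  funext m
  simp only [grains, addGrain]
  split_ifs <;> omega

lemma avalanche_spec {D k : ℕ} (hD : 2 ≤ D) (hk : 1 ≤ k) :
    Exec D (addGrain (piN D (k - 1))) (avalanche D k) (piN D k) ∧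
    ∀ s', Exec D (addGrain (piN D (k - 1))) s' (piN D k) →
      avalanche D k = s' ∨ List.Lex (· < ·) (avalanche D k) s' := by
  have hex : ∃ s, Exec D (addGrain (piN D (k - 1))) s (piN D k) ∧
      ∀ s', Exec D (addGrain (piN D (k - 1))) s' (piN D k) →
        s = s' ∨ List.Lex (· < ·) s s' := by
    obtain ⟨hr1, hs1⟩ := piN_spec hD (k-1)
    obtain ⟨hrk, hsk⟩ := piN_spec hD k
    set σ0 := addGrain (piN D (k-1)) with hσ0
    have hr0 : Reaches D (grains k) σ0 := by
      rw [grains_eq_addGrain hk]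
      exact reaches_addGrain hD hr1
    have hreach : Reaches D σ0 (piN D k) := reaches_stable hD hr0 hrk hsk
    obtain ⟨sstar, hsstar⟩ := exec_of_reaches hreach
    set S : Set (List ℕ) := {s | Exec D σ0 s (piN D k)} with hS
    have hsub : S ⊆ ↑sstar.permutations.toFinset := by
      intro s hs
      simp only [List.coe_toFinset, Set.mem_setOf_eq, List.mem_permutations]
      exact List.perm_iff_count.2 (counts_unique hD hs hsstar)
    have hfin : S.Finite := Set.Finite.subset (sstar.permutations.toFinset).finite_toSet hsub
    have hne : S.Nonempty := ⟨sstar, hsstar⟩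
    have hTne : hfin.toFinset.Nonempty := by
      rwa [Set.Finite.toFinset_nonempty]
    refine ⟨hfin.toFinset.min' hTne, ?_, ?_⟩
    · exact (Set.Finite.mem_toFinset hfin).1 (Finset.min'_mem _ hTne)
    · intro s' hs'
      have hmem : s' ∈ hfin.toFinset := (Set.Finite.mem_toFinset hfin).2 hs'
      have hle := Finset.min'_le _ s' hmem
      rcases lt_or_eq_of_le hle with hlt | heq
      · right
        exact hlt
      · left; exact heq
  unfold avalanche
  exact Classical.epsilon_spec hex

/-! ### Peaks -/

lemma max_is_peak : ∀ (l : List ℕ) (M : ℕ), M ∈ l → (∀ j, j ∈ l → j ≤ M) → IsPeak l M := by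
  intro l
  induction l with
  | nil => intro M h; cases h
  | cons a t ih =>
    intro M hM hbound
    by_cases haM : a = M
    · refine ⟨⟨0, by simp⟩, by simpa using haM, ?_⟩
      rintro ⟨u, hu⟩ hlt
      exact absurd hlt (by simp [Fin.lt_def])
    · have hMt : M ∈ t := by
        rcases List.mem_cons.1 hM with h | h
        · exact absurd h.symm haM
        · exact h
      obtain ⟨⟨n, hn⟩, hget, hlt⟩ := ih M hMt (fun j hj => hbound j (List.mem_cons_of_mem a hj))
      refine ⟨⟨n+1, by simpa using Nat.succ_lt_succ hn⟩, by simpa using hget, ?_⟩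
      rintro ⟨u, hu⟩ hlt'
      cases u with
      | zero =>
        have hb : a ≤ M := hbound a List.mem_cons_self
        simpa using lt_of_le_of_ne hb haM
      | succ u =>
        have hu' : u < t.length := by simpa using Nat.lt_of_succ_lt_succ hu
        have := hlt ⟨u, hu'⟩ (by simp only [Fin.lt_def] at hlt' ⊢; omega)
        simpa using this

lemma foldr_max_mem : ∀ (l : List ℕ), l ≠ [] → l.foldr max 0 ∈ l := by
  intro l
  induction l with
  | nil => intro h; exact absurd rfl h
  | cons a t ih =>
    intro _
    rcases List.eq_nil_or_concat t with rfl | _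
    · simp
    · have htne : t ≠ [] := by
        rintro rfl
        simp_all
      rcases max_choice a (t.foldr max 0) with h | h
      · simp only [List.foldr_cons, h]
        exact List.mem_cons_self
      · simp only [List.foldr_cons, h]
        exact List.mem_cons_of_mem a (ih htne)

lemma peak_is_max {s : List ℕ} {P : ℕ} (hP : IsPeak s P)
    (hPmax : ∀ q, IsPeak s q → q ≤ P) : P ∈ s ∧ ∀ j, j ∈ s → j ≤ P := by
  obtain ⟨t, hget, -⟩ := hP
  have hPmem : P ∈ s := hget ▸ List.get_mem s t
  have hsne : s ≠ [] := by
    rintro rfl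
    exact absurd t.2 (by simp)
  refine ⟨hPmem, fun j hj => ?_⟩
  have hMP : s.foldr max 0 ≤ P :=
    hPmax _ (max_is_peak s _ (foldr_max_mem s hsne) (fun j hj => mem_le_foldr_max s j hj))
  exact le_trans (mem_le_foldr_max s j hj) hMP


/-- Effect of a long avalanche on the fixed point. If `s^k` (`1 ≤ k ≤ N`) is a
long avalanche up to `N` and `P` is its largest peak, then `π(k)` and
`π(k−1)` agree on `[L+D−1, P)`, `π(k−1)_P = D−1` and `π(k)_P = 0`, `π(k)`
exceeds `π(k−1)` by one on `(P, P+D−1]`, and they agree beyond `P+D−1`. -/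
theorem long_avalanche_effect (D N k : ℕ) (hD : 2 ≤ D)
    (hk1 : 1 ≤ k) (hkN : k ≤ N)
    (hlong : Lgdc D N + D - 1 ∈ avalanche D k)
    (P : ℕ) (hP : IsPeak (avalanche D k) P)
    (hPmax : ∀ q, IsPeak (avalanche D k) q → q ≤ P) :
    (∀ i, Lgdc D N + D - 1 ≤ i → i < P → piN D k i = piN D (k - 1) i) ∧
    piN D (k - 1) P = D - 1 ∧ piN D k P = 0 ∧
    (∀ i, P < i → i ≤ P + (D - 1) → piN D k i = piN D (k - 1) i + 1) ∧
    (∀ i, P + (D - 1) < i → piN D k i = piN D (k - 1) i) := by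
  set s := avalanche D k with hs
  have hexec := (avalanche_spec hD hk1).1
  have hτs : Stable D (piN D (k-1)) := (piN_spec hD (k-1)).2
  have hnd : s.Nodup := exec_nodup hD hτs s (piN D k) hexec
  have hpm := peak_is_max hP hPmax
  have hPL : Lgdc D N + D - 1 ≤ P := hpm.2 _ hlong
  have hLp : Lp D k ≤ Lgdc D N := Finset.le_sup (Finset.mem_Icc.2 ⟨hk1, hkN⟩)
  have hdense : DenseFrom s (Lp D k) := by
    have hne : {l | DenseFrom s l}.Nonempty := by
      refine ⟨s.foldr max 0 + 1, s.foldr max 0, fun i h1 h2 => absurd (le_trans h1 h2) (by omega),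
        fun i hi hmem => ?_⟩
      have := mem_le_foldr_max s i hmem
      omega
    exact Nat.sInf_mem hne
  obtain ⟨m, hm1, hm2⟩ := hdense
  have hPm : P ≤ m := by
    by_contra h
    exact hm2 P (by omega) hpm.1
  have hcnt1 : ∀ j, Lp D k ≤ j → j ≤ P → s.count j = 1 := fun j h1 h2 =>
    List.count_eq_one_of_mem hnd (hm1 j h1 (le_trans h2 hPm))
  have hcnt0 : ∀ j, P < j → s.count j = 0 := fun j h =>
    List.count_eq_zero.2 (fun hmem => absurd (hpm.2 j hmem) (by omega))
  have hkey := exec_count hD s _ _ hexec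
  have hag : ∀ i, i ≠ 0 → addGrain (piN D (k-1)) i = piN D (k-1) i := fun i h => by
    unfold addGrain
    rw [if_neg h]
  have hP1 : 1 ≤ P := by omega
  refine ⟨?_, ?_, ?_, ?_, ?_⟩
  · -- region [L+D-1, P)
    intro i h1 h2
    have e := hkey i
    rw [hag i (by omega), if_pos (show D-1 ≤ i from by omega),
      hcnt1 i (by omega) (by omega), hcnt1 (i+1) (by omega) (by omega),
      hcnt1 (i-(D-1)) (by omega) (by omega)] at e
    omega
  · -- τ P = D - 1
    have e := hkey P
    rw [hag P (by omega), if_pos (show D-1 ≤ P from by omega),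
      hcnt1 P (by omega) le_rfl, hcnt0 (P+1) (by omega),
      hcnt1 (P-(D-1)) (by omega) (by omega)] at e
    have := hτs P
    omega
  · -- φ P = 0
    have e := hkey P
    rw [hag P (by omega), if_pos (show D-1 ≤ P from by omega),
      hcnt1 P (by omega) le_rfl, hcnt0 (P+1) (by omega),
      hcnt1 (P-(D-1)) (by omega) (by omega)] at e
    have := hτs P
    omega
  · -- region (P, P + D - 1]
    intro i h1 h2
    have e := hkey i
    rw [hag i (by omega), if_pos (show D-1 ≤ i from by omega),
      hcnt0 i (by omega), hcnt0 (i+1) (by omega),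
      hcnt1 (i-(D-1)) (by omega) (by omega)] at e
    omega
  · -- region beyond P + D - 1
    intro i h1
    have e := hkey i
    rw [hag i (by omega), if_pos (show D-1 ≤ i from by omega),
      hcnt0 i (by omega), hcnt0 (i+1) (by omega),
      hcnt0 (i-(D-1)) (by omega)] at e
    omega
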